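/- Let V ≠ {0} be a normed vector space, X ≠ {0} a Banach space, and E a reasonable sequence space of X-valued sequences. The set D_{V,E} of continuous linear non-surjective operators u : V → E is (1, 𝔠)-lineable in L(V, E): for every nonzero v ∈ D_{V,E} there exists a linear subspace W of L(V, E) with dim W = 𝔠, v ∈ W, and W ⊆ D_{V,E} ∪ {0}. -/

import Mathlib

open Cardinal Set

/-- For V ≠ {0} normed, X ≠ {0} Banach and E a reasonable sequence space of
X-valued sequences, the set of non-surjective continuous linear operators V → E is
(1, 𝔠)-lineable. -/
theorem stmt7 {V X E : Type*}
    [NormedAddCommGroup V] [NormedSpace ℝ V] [Nontrivial V]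
    [NormedAddCommGroup X] [NormedSpace ℝ X] [CompleteSpace X] [Nontrivial X]
    [NormedAddCommGroup E] [NormedSpace ℝ E] [CompleteSpace E]
    (coord : E →ₗ[ℝ] (ℕ → X))
    (hinj : Function.Injective coord)
    (hc00 : ∀ f : ℕ → X, (Function.support f).Finite → f ∈ Set.range coord)
    (hmul : ∀ (α : ℕ → ℝ) (C : ℝ), (∀ n, |α n| ≤ C) → ∀ x : E,
      ∃ y : E, coord y = (fun n => α n • coord x n) ∧ ‖y‖ ≤ C * ‖x‖)
    (v : V →L[ℝ] E) (hv : v ≠ 0) (hsurj : ¬ Function.Surjective ⇑v) :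
    ∃ W : Submodule ℝ (V →L[ℝ] E),
      Module.rank ℝ W = Cardinal.continuum ∧ v ∈ W ∧
      ∀ u ∈ W, u ≠ 0 → ¬ Function.Surjective ⇑u := by
  classical
  -- a nonzero vector of X
  obtain ⟨x₀, hx₀⟩ := exists_ne (0 : X)
  -- coordinate vectors
  have hex : ∀ n : ℕ, ∃ y : E, coord y = Pi.single n x₀ := by
    intro n
    apply hc00
    apply (Set.finite_singleton n).subset
    intro k hk
    rcases eq_or_ne k n with rfl | hkn
    · exact Set.mem_singleton _
    · have h0 : (Pi.single n x₀ : ℕ → X) k = 0 := Pi.single_eq_of_ne (M := fun _ => X) hkn x₀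
      exact absurd h0 (Function.mem_support.mp hk)
  choose e he using hex
  have hen : ∀ n, e n ≠ 0 := by
    intro n h
    apply hx₀
    have h0 : coord (e n) = 0 := by rw [h, map_zero]
    have h1 := congrFun (h0 ▸ he n) n
    simpa using h1.symm
  -- coordinate projections P n
  have hproj : ∀ n : ℕ, ∃ P : E →L[ℝ] E,
      ∀ x : E, coord (P x) = fun k => (if k = n then (1:ℝ) else 0) • coord x k := by
    intro n
    set α : ℕ → ℝ := fun k => if k = n then (1:ℝ) else 0 with hα
    have hαb : ∀ k, |α k| ≤ 1 := by
      intro k; simp only [α]; split <;> simp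
    choose p hp hpn using fun x => hmul α 1 hαb x
    have hadd : ∀ a b, p (a + b) = p a + p b := by
      intro a b
      apply hinj
      rw [map_add, hp, hp, hp]
      funext k
      rw [map_add]
      simp [smul_add]
    have hsmul : ∀ (c : ℝ) a, p (c • a) = c • p a := by
      intro c a
      apply hinj
      rw [map_smul, hp, hp]
      funext k
      rw [map_smul]
      simp only [Pi.smul_apply]
      rw [smul_comm]
    exact ⟨LinearMap.mkContinuous ⟨⟨p, hadd⟩, hsmul⟩ 1 (fun x => hpn x), fun x => hp x⟩
  choose P hP using hproj
  -- normalized coordinate vectors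
  set r : ℕ → ℝ := fun n => ((2:ℝ) ^ n * ‖e n‖)⁻¹ with hr
  have hrpos : ∀ n, 0 < r n := by
    intro n
    apply inv_pos.mpr
    have : 0 < ‖e n‖ := norm_pos_iff.mpr (hen n)
    positivity
  set u : ℕ → E := fun n => r n • e n with hu
  have hun : ∀ n, u n ≠ 0 := fun n => smul_ne_zero (ne_of_gt (hrpos n)) (hen n)
  have hunorm : ∀ n, ‖u n‖ = ((2:ℝ)⁻¹) ^ n := by
    intro n
    have hne : ‖e n‖ ≠ 0 := norm_ne_zero_iff.mpr (hen n)
    rw [hu]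
    simp only [norm_smul, Real.norm_eq_abs, hr, abs_of_pos (hrpos n)]
    rw [mul_inv, inv_pow]
    field_simp
    rw [abs_of_pos (by rw [one_div]; exact hrpos n),
      mul_one_div_cancel (mul_ne_zero (pow_ne_zero n two_ne_zero) hne)]
  have hucoord : ∀ n, coord (u n) = fun k => r n • Pi.single n x₀ k := by
    intro n
    rw [hu]
    simp only [map_smul, he]
    rfl
  -- P n acts on u k
  have hPu : ∀ n k, P n (u k) = if k = n then u n else 0 := by
    intro n k
    apply hinj
    rw [hP]
    rcases eq_or_ne k n with rfl | hkn
    · simp only [if_pos rfl]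
      funext m
      rcases eq_or_ne m k with rfl | hmk
      · simp
      · simp [hucoord, Pi.single_eq_of_ne hmk, if_neg hmk]
    · rw [if_neg hkn, map_zero]
      funext m
      rcases eq_or_ne m n with rfl | hmn
      · simp [hucoord, Pi.single_eq_of_ne (Ne.symm hkn)]
      · simp [if_neg hmn]
  -- the vectors y t
  have hsummable : ∀ t : ℝ, t ∈ Set.Ioo (0:ℝ) 1 → Summable (fun n : ℕ => t ^ n • u n) := by
    intro t ht
    apply Summable.of_norm
    have hb : ∀ n : ℕ, ‖t ^ n • u n‖ ≤ t ^ n := by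
      intro n
      rw [norm_smul, hunorm, Real.norm_eq_abs, abs_of_pos (pow_pos ht.1 n)]
      calc t ^ n * ((2:ℝ)⁻¹) ^ n ≤ t ^ n * 1 := by
            apply mul_le_mul_of_nonneg_left _ (le_of_lt (pow_pos ht.1 n))
            apply pow_le_one₀ <;> norm_num
        _ = t ^ n := mul_one _
    exact Summable.of_nonneg_of_le (fun n => norm_nonneg _) hb
      (summable_geometric_of_lt_one (le_of_lt ht.1) ht.2)
  set y : ℝ → E := fun t => ∑' n : ℕ, t ^ n • u n with hy
  have hPy : ∀ (n : ℕ) (t : ℝ), t ∈ Set.Ioo (0:ℝ) 1 → P n (y t) = t ^ n • u n := by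
    intro n t ht
    rw [hy]
    rw [ContinuousLinearMap.map_tsum _ (hsummable t ht)]
    have heq : ∀ k : ℕ, P n (t ^ k • u k) = if k = n then t ^ n • u n else 0 := by
      intro k
      rw [map_smul, hPu]
      rcases eq_or_ne k n with rfl | hkn
      · simp
      · simp [if_neg hkn]
    rw [tsum_congr heq, tsum_eq_single n (fun k hk => by rw [if_neg hk])]
    simp
  -- linear independence of the y t
  have hli : LinearIndependent ℝ (fun t : Set.Ioo (0:ℝ) 1 => y t) := by
    rw [linearIndependent_iff']
    intro s c hsum0 i hi
    have hc : ∀ n : ℕ, ∑ j ∈ s, c j * (j : ℝ) ^ n = 0 := by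
      intro n
      have h1 : ∑ j ∈ s, (c j * (j : ℝ) ^ n) • u n = 0 := by
        calc ∑ j ∈ s, (c j * (j : ℝ) ^ n) • u n
            = ∑ j ∈ s, P n (c j • y j) := by
              refine Finset.sum_congr rfl fun j hj => ?_
              rw [map_smul, hPy n j j.2, mul_smul]
          _ = P n (∑ j ∈ s, c j • y j) := (map_sum (P n) _ s).symm
          _ = 0 := by rw [hsum0, map_zero]
      rw [← Finset.sum_smul] at h1
      rcases smul_eq_zero.mp h1 with h | h
      · exact h
      · exact absurd h (hun n)
    -- Vandermonde argument
    set σ := s.equivFin with hσ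
    set w : Fin s.card → ℝ := fun j => ((σ.symm j : Set.Ioo (0:ℝ) 1) : ℝ) with hw
    have hwinj : Function.Injective w := by
      intro a b hab
      apply σ.symm.injective
      exact Subtype.ext (Subtype.ext hab)
    set d : Fin s.card → ℝ := fun j => c (σ.symm j) with hd
    have hvec : Matrix.vecMul d (Matrix.vandermonde w) = 0 := by
      funext n
      have h3 : ∑ j : Fin s.card, d j * w j ^ (n : ℕ) = 0 := by
        have h4 : ∑ i : ↥s, c ↑i * ((i : Set.Ioo (0:ℝ) 1) : ℝ) ^ (n : ℕ)
            = ∑ j : Fin s.card, d j * w j ^ (n : ℕ) :=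
          Fintype.sum_equiv σ _ _ (fun a => by
            simp only [hd, hw, Equiv.symm_apply_apply])
        rw [← h4, Finset.univ_eq_attach,
          Finset.sum_attach s (fun i => c i * (i : ℝ) ^ (n : ℕ))]
        exact hc (n : ℕ)
      simpa [Matrix.vecMul, dotProduct, Matrix.vandermonde] using h3
    have hdet : (Matrix.vandermonde w).det ≠ 0 :=
      Matrix.det_vandermonde_ne_zero_iff.mpr hwinj
    have hd0 := Matrix.eq_zero_of_vecMul_eq_zero hdet hvec
    have hci : c i = d (σ ⟨i, hi⟩) := by simp only [hd, Equiv.symm_apply_apply]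
    rw [hci, hd0]
    rfl
  -- rank of E is at least continuum
  have hrankE : 𝔠 ≤ Module.rank ℝ E := by
    have h := hli.cardinal_lift_le_rank
    rw [Cardinal.mk_Ioo_real zero_lt_one, Cardinal.lift_continuum] at h
    rwa [Cardinal.lift_uzero] at h
  -- a vector outside the range of v
  obtain ⟨y₀, hy₀⟩ : ∃ y₀ : E, ∀ x, v x ≠ y₀ := by
    by_contra h
    push_neg at h
    exact hsurj fun b => h b
  set F : Submodule ℝ E := LinearMap.range (v : V →ₗ[ℝ] E) with hF
  have hy₀F : y₀ ∉ F := by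
    rintro ⟨x, hx⟩
    exact hy₀ x hx
  have hq : F.mkQ y₀ ≠ 0 := by
    rw [Submodule.mkQ_apply, ne_eq, Submodule.Quotient.mk_eq_zero]
    exact hy₀F
  obtain ⟨φ, hφ⟩ : ∃ φ : Module.Dual ℝ (E ⧸ F), φ (F.mkQ y₀) ≠ 0 := by
    by_contra h
    push_neg at h
    exact hq ((Module.forall_dual_apply_eq_zero_iff ℝ _).mp h)
  set g : E →ₗ[ℝ] ℝ := φ.comp F.mkQ with hg
  have hgy₀ : g y₀ ≠ 0 := hφ
  have hgv : ∀ x, g (v x) = 0 := by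
    intro x
    have : F.mkQ (v x) = 0 := by
      rw [Submodule.mkQ_apply, Submodule.Quotient.mk_eq_zero]
      exact ⟨x, rfl⟩
    rw [hg, LinearMap.comp_apply, this, map_zero]
  -- the kernel of g has rank at least continuum
  have hker : 𝔠 ≤ Module.rank ℝ (LinearMap.ker g) := by
    by_contra hcon
    push_neg at hcon
    have h1 := LinearMap.lift_rank_range_add_rank_ker g
    rw [Cardinal.lift_uzero, Cardinal.lift_uzero] at h1
    have h3 : Module.rank ℝ E < 𝔠 := by
      rw [← h1]
      refine Cardinal.add_lt_of_lt aleph0_le_continuum ?_ hcon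
      calc Cardinal.lift (Module.rank ℝ (LinearMap.range g))
          ≤ Cardinal.lift 1 :=
            Cardinal.lift_le.mpr ((Submodule.rank_le _).trans_eq (Module.rank_self ℝ))
        _ = 1 := Cardinal.lift_one
        _ < 𝔠 := Cardinal.one_lt_aleph0.trans_le aleph0_le_continuum
    exact absurd hrankE (not_le.mpr h3)
  obtain ⟨s, hs𝔠, hsli⟩ := le_rank_iff_exists_linearIndependent.mp hker
  set E₀ : Submodule ℝ E := Submodule.map (LinearMap.ker g).subtype (Submodule.span ℝ s) with hE₀
  have hE₀le : E₀ ≤ LinearMap.ker g := Submodule.map_subtype_le _ _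
  have hE₀rank : Module.rank ℝ E₀ = 𝔠 := by
    rw [hE₀, ← (Submodule.equivMapOfInjective _ (Submodule.injective_subtype _) _).rank_eq]
    rw [rank_span_set hsli, hs𝔠]
  -- a nonzero continuous functional on V
  obtain ⟨w₀, hw₀⟩ := exists_ne (0 : V)
  obtain ⟨f, hf1, hfw⟩ := exists_dual_vector ℝ w₀ (norm_ne_zero_iff.mpr hw₀)
  have hfne : ∃ x, f x ≠ 0 := ⟨w₀, by rw [hfw]; exact norm_ne_zero_iff.mpr hw₀⟩
  -- the rank one operator map
  set L : E →ₗ[ℝ] (V →L[ℝ] E) :=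
    { toFun := fun a => f.smulRight a
      map_add' := fun a b => by
        ext x
        simp [smul_add]
      map_smul' := fun c a => by
        ext x
        simp only [ContinuousLinearMap.smulRight_apply, RingHom.id_apply,
          ContinuousLinearMap.coe_smul', Pi.smul_apply]
        rw [smul_comm] } with hL
  have hLinj : Function.Injective L := by
    intro a b hab
    obtain ⟨x, hx⟩ := hfne
    have h1 : f x • a = f x • b := by
      have := congrArg (fun (w : V →L[ℝ] E) => w x) hab
      simpa [hL] using this
    exact smul_right_injective E hx h1
  -- the submodule of operators with range in ker g
  set S : Submodule ℝ (V →L[ℝ] E) :=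
    { carrier := {w | ∀ x, g (w x) = 0}
      add_mem' := fun {a b} ha hb x => by
        simp only [ContinuousLinearMap.add_apply, map_add, ha x, hb x, add_zero]
      zero_mem' := fun x => by simp
      smul_mem' := fun c a ha x => by
        simp only [ContinuousLinearMap.coe_smul', Pi.smul_apply, map_smul, ha x, smul_zero] } with hS
  refine ⟨Submodule.span ℝ {v} ⊔ Submodule.map L E₀, ?_, ?_, ?_⟩
  · -- rank is continuum
    have h2 : Module.rank ℝ (Submodule.map L E₀) = 𝔠 := by
      have h4 := (Submodule.equivMapOfInjective L hLinj E₀).lift_rank_eq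
      rw [hE₀rank, Cardinal.lift_continuum, Cardinal.lift_id'] at h4
      exact h4.symm
    apply le_antisymm
    · refine (Submodule.rank_add_le_rank_add_rank _ _).trans ?_
      have h1 : Module.rank ℝ (Submodule.span ℝ ({v} : Set (V →L[ℝ] E))) ≤ 1 := by
        refine (rank_span_le _).trans ?_
        rw [Cardinal.mk_singleton]
      rw [h2]
      calc Module.rank ℝ (Submodule.span ℝ ({v} : Set (V →L[ℝ] E))) + 𝔠
          ≤ 1 + 𝔠 := add_le_add_left h1 _
        _ = 𝔠 := Cardinal.add_eq_right aleph0_le_continuum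
            (le_of_lt (Cardinal.one_lt_aleph0.trans_le aleph0_le_continuum))
    · rw [← h2]
      exact Submodule.rank_mono le_sup_right
  · exact Submodule.mem_sup_left (Submodule.mem_span_singleton_self v)
  · -- non-surjectivity
    have hWS : Submodule.span ℝ {v} ⊔ Submodule.map L E₀ ≤ S := by
      apply sup_le
      · rw [Submodule.span_singleton_le_iff_mem]
        show ∀ x, g (v x) = 0
        exact hgv
      · rintro _ ⟨a, ha, rfl⟩
        show ∀ x, _
        intro x
        have hak : a ∈ LinearMap.ker g := hE₀le ha
        simp only [hL, LinearMap.coe_mk, AddHom.coe_mk, ContinuousLinearMap.smulRight_apply,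
          map_smul, LinearMap.mem_ker.mp hak, smul_zero]
    intro w hw _ hws
    obtain ⟨x, hx⟩ := hws y₀
    have h0 : g (w x) = 0 := hWS hw x
    rw [hx] at h0
    exact hgy₀ h0
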